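/- arXiv:1703.07666 — 2 statements merged into one kernel-verified Lean document; each statement's English description precedes it below -/
import Mathlib

section
/- Bucket-hitting probability bound: There exists N such that for every n ≥ N the following holds with m = n^256 (so √m = n^128 is an integer). Let I ⊆ [n] be nonempty, and let ℓ be a random variable over [√m]^I that is 0.8-essentially-dense, i.e., for every nonempty H ⊆ I and every β ∈ [√m]^H, Pr[ℓ_H = β] ≤ 2 · (√m)^(−0.8|H|). Let B_i ⊆ [√m] be sets with |B_i| ≤ 2n³ for each i ∈ I. Then Pr[ |{i ∈ I : ℓ_i ∈ B_i}| ≥ |I|/2 ] ≤ (1/12) · n^(−5|I|). -/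
open Finset

lemma sum_biUnion_le_nonneg {α β : Type*} [DecidableEq α] [DecidableEq β] (S : Finset α)
    (t : α → Finset β) (f : β → ℝ) (hf : ∀ x, 0 ≤ f x) :
    ∑ x ∈ S.biUnion t, f x ≤ ∑ a ∈ S, ∑ x ∈ t a, f x := by
  induction S using Finset.induction with
  | empty => simp
  | @insert a S ha ih =>
    rw [Finset.biUnion_insert, Finset.sum_insert ha]
    have h1 : ∑ x ∈ t a ∪ S.biUnion t, f x ≤ ∑ x ∈ t a, f x + ∑ x ∈ S.biUnion t, f x := by
      have := Finset.sum_union_inter (s₁ := t a) (s₂ := S.biUnion t) (f := f)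
      have h2 : 0 ≤ ∑ x ∈ t a ∩ S.biUnion t, f x := Finset.sum_nonneg fun x _ => hf x
      linarith
    exact h1.trans (by linarith)

lemma sum_le_biUnion_sum {α β : Type*} [DecidableEq α] [DecidableEq β] {S : Finset α}
    {t : α → Finset β} {s : Finset β} {f : β → ℝ} (hf : ∀ x, 0 ≤ f x)
    (hsub : s ⊆ S.biUnion t) :
    ∑ x ∈ s, f x ≤ ∑ a ∈ S, ∑ x ∈ t a, f x :=
  (Finset.sum_le_sum_of_subset_of_nonneg hsub fun x _ _ => hf x).trans
    (sum_biUnion_le_nonneg S t f hf)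

open Classical in
/-- **Bucket-hitting probability bound.** There is `N` such that for all `n ≥ N` (with
`√m = n^128`): if `I ⊆ [n]` is nonempty and `ℓ` is a random variable over `[√m]^I`
(given by a pmf `pℓ`) that is 0.8-essentially-dense, i.e.
`Pr[ℓ_H = β] ≤ 2·(√m)^(−0.8|H|)` for all nonempty `H ⊆ I` and all `β`, and `Bᵢ ⊆ [√m]`
with `|Bᵢ| ≤ 2n³` for each `i ∈ I`, then
`Pr[|{i ∈ I : ℓᵢ ∈ Bᵢ}| ≥ |I|/2] ≤ (1/12)·n^(−5|I|)`. -/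
theorem bucket_hitting_bound :
    ∃ N : ℕ, ∀ n : ℕ, N ≤ n →
    ∀ I : Finset (Fin n), I.Nonempty →
    ∀ pℓ : ({i // i ∈ I} → Fin (n ^ 128)) → ℝ,
      (∀ ℓ, 0 ≤ pℓ ℓ) → (∑ ℓ, pℓ ℓ = 1) →
      -- ℓ is 0.8-essentially-dense
      (∀ H : Finset {i // i ∈ I}, H.Nonempty → ∀ β : {i // i ∈ I} → Fin (n ^ 128),
        ∑ ℓ ∈ Finset.univ.filter
            (fun ℓ : {i // i ∈ I} → Fin (n ^ 128) => ∀ i ∈ H, ℓ i = β i), pℓ ℓ ≤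
          2 * ((n ^ 128 : ℕ) : ℝ) ^ (-(0.8 * (H.card : ℝ)))) →
    ∀ B : {i // i ∈ I} → Finset (Fin (n ^ 128)),
      (∀ i, (B i).card ≤ 2 * n ^ 3) →
      ∑ ℓ ∈ Finset.univ.filter
          (fun ℓ : {i // i ∈ I} → Fin (n ^ 128) =>
            I.card ≤ 2 * (Finset.univ.filter fun i => ℓ i ∈ B i).card), pℓ ℓ ≤
        (1 / 12) * (n : ℝ) ^ (-(5 * (I.card : ℝ))) := by
  use 24
  intro n hn I hI pℓ hp hsum hdense B hB
  have hn1 : 1 ≤ n := by omega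
  set k := I.card with hk
  have hk1 : 1 ≤ k := hI.card_pos
  set h0 := (k + 1) / 2 with hh0
  have hh0k : h0 ≤ k := by omega
  have hh01 : 1 ≤ h0 := by omega
  have hm : 0 < n ^ 128 := by positivity
  let d : Fin (n ^ 128) := ⟨0, hm⟩
  let T : Type _ := {i // i ∈ I} → Fin (n ^ 128)
  -- the family of piFinsets
  let S : Finset {i // i ∈ I} → Finset T :=
    fun H => Fintype.piFinset (fun i => if i ∈ H then B i else {d})
  let E : Finset {i // i ∈ I} → T → Finset T :=
    fun H β => Finset.univ.filter (fun ℓ : T => ∀ i ∈ H, ℓ i = β i)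
  have hcardI : Fintype.card {i // i ∈ I} = k := Fintype.card_coe I
  -- subset step
  have hsub : (Finset.univ.filter
      (fun ℓ : T => k ≤ 2 * (Finset.univ.filter fun i => ℓ i ∈ B i).card)) ⊆
      (Finset.powersetCard h0 (Finset.univ : Finset {i // i ∈ I})).biUnion
        (fun H => (S H).biUnion (fun β => E H β)) := by
    intro ℓ hℓ
    rw [Finset.mem_filter] at hℓ
    have hA : h0 ≤ (Finset.univ.filter fun i => ℓ i ∈ B i).card := by omega
    obtain ⟨H, hHA, hHcard⟩ :=
      Finset.exists_subset_card_eq (s := Finset.univ.filter fun i => ℓ i ∈ B i) hA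
    refine Finset.mem_biUnion.2 ⟨H, ?_, ?_⟩
    · exact Finset.mem_powersetCard.2 ⟨Finset.subset_univ H, hHcard⟩
    refine Finset.mem_biUnion.2 ⟨fun i => if i ∈ H then ℓ i else d, ?_, ?_⟩
    · refine Fintype.mem_piFinset.2 fun i => ?_
      by_cases hi : i ∈ H
      · simpa [hi] using (Finset.mem_filter.1 (hHA hi)).2
      · simp [hi]
    · refine Finset.mem_filter.2 ⟨Finset.mem_univ _, fun i hi => ?_⟩
      simp [hi]
  -- first union bound
  have step1 : ∑ ℓ ∈ Finset.univ.filter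
      (fun ℓ : T => k ≤ 2 * (Finset.univ.filter fun i => ℓ i ∈ B i).card), pℓ ℓ ≤
      ∑ H ∈ Finset.powersetCard h0 (Finset.univ : Finset {i // i ∈ I}),
        ∑ ℓ ∈ (S H).biUnion (fun β => E H β), pℓ ℓ :=
    sum_le_biUnion_sum hp hsub
  -- per-H bound
  have step2 : ∀ H ∈ Finset.powersetCard h0 (Finset.univ : Finset {i // i ∈ I}),
      ∑ ℓ ∈ (S H).biUnion (fun β => E H β), pℓ ℓ ≤
      ((2 * n ^ 3 : ℕ) : ℝ) ^ h0 * (2 * ((n ^ 128 : ℕ) : ℝ) ^ (-(0.8 * (h0 : ℝ)))) := by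
    intro H hH
    obtain ⟨-, hHcard⟩ := Finset.mem_powersetCard.1 hH
    have hHne : H.Nonempty := Finset.card_pos.1 (by omega)
    have hbd : ∀ β ∈ S H, ∑ ℓ ∈ E H β, pℓ ℓ ≤
        2 * ((n ^ 128 : ℕ) : ℝ) ^ (-(0.8 * (h0 : ℝ))) := by
      intro β _
      have := hdense H hHne β
      rwa [hHcard] at this
    calc ∑ ℓ ∈ (S H).biUnion (fun β => E H β), pℓ ℓ
        ≤ ∑ β ∈ S H, ∑ ℓ ∈ E H β, pℓ ℓ := sum_biUnion_le_nonneg _ _ _ hp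
      _ ≤ ∑ _β ∈ S H, 2 * ((n ^ 128 : ℕ) : ℝ) ^ (-(0.8 * (h0 : ℝ))) :=
          Finset.sum_le_sum hbd
      _ = ((S H).card : ℝ) * (2 * ((n ^ 128 : ℕ) : ℝ) ^ (-(0.8 * (h0 : ℝ)))) := by
          rw [Finset.sum_const, nsmul_eq_mul]
      _ ≤ ((2 * n ^ 3 : ℕ) : ℝ) ^ h0 * (2 * ((n ^ 128 : ℕ) : ℝ) ^ (-(0.8 * (h0 : ℝ)))) := by
          have hScard : (S H).card ≤ (2 * n ^ 3) ^ h0 := by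
            have h1 : (S H).card = ∏ i : {i // i ∈ I}, (if i ∈ H then B i else {d}).card :=
              Fintype.card_piFinset _
            rw [h1]
            calc ∏ i : {i // i ∈ I}, (if i ∈ H then B i else {d}).card
                ≤ ∏ i : {i // i ∈ I}, (if i ∈ H then 2 * n ^ 3 else 1) := by
                  refine Finset.prod_le_prod' fun i _ => ?_
                  by_cases hi : i ∈ H
                  · simpa [hi] using hB i
                  · simp [hi]
              _ = (2 * n ^ 3) ^ h0 := by
                  rw [Finset.prod_ite_mem, Finset.univ_inter, Finset.prod_const, hHcard]
          have hpos : (0 : ℝ) ≤ 2 * ((n ^ 128 : ℕ) : ℝ) ^ (-(0.8 * (h0 : ℝ))) := by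
            positivity
          calc ((S H).card : ℝ) * _ ≤ (((2 * n ^ 3) ^ h0 : ℕ) : ℝ) * _ := by
                gcongr
            _ = ((2 * n ^ 3 : ℕ) : ℝ) ^ h0 * _ := by push_cast; ring_nf
  -- combine
  have hchoose : (Finset.powersetCard h0 (Finset.univ : Finset {i // i ∈ I})).card
      = Nat.choose k h0 := by
    rw [Finset.card_powersetCard, Finset.card_univ, hcardI]
  have step3 : ∑ ℓ ∈ Finset.univ.filter
      (fun ℓ : T => k ≤ 2 * (Finset.univ.filter fun i => ℓ i ∈ B i).card), pℓ ℓ ≤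
      (Nat.choose k h0 : ℝ) * (((2 * n ^ 3 : ℕ) : ℝ) ^ h0 *
        (2 * ((n ^ 128 : ℕ) : ℝ) ^ (-(0.8 * (h0 : ℝ))))) := by
    refine step1.trans ?_
    calc ∑ H ∈ Finset.powersetCard h0 (Finset.univ : Finset {i // i ∈ I}),
          ∑ ℓ ∈ (S H).biUnion (fun β => E H β), pℓ ℓ
        ≤ ∑ _H ∈ Finset.powersetCard h0 (Finset.univ : Finset {i // i ∈ I}),
          ((2 * n ^ 3 : ℕ) : ℝ) ^ h0 * (2 * ((n ^ 128 : ℕ) : ℝ) ^ (-(0.8 * (h0 : ℝ)))) :=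
          Finset.sum_le_sum step2
      _ = _ := by rw [Finset.sum_const, nsmul_eq_mul, hchoose]
  refine step3.trans ?_
  -- now pure real arithmetic
  have hx : (24 : ℝ) ≤ (n : ℝ) := by exact_mod_cast hn
  set x := (n : ℝ) with hxdef
  have hx0 : (0 : ℝ) < x := by linarith
  have hx1 : (1 : ℝ) ≤ x := by linarith
  set c := (h0 : ℝ) with hcdef
  set kk := (k : ℝ) with hkkdef
  have hck : kk ≤ 2 * c := by
    have : k ≤ 2 * h0 := by omega
    rw [hkkdef, hcdef]
    calc ((k : ℕ) : ℝ) ≤ ((2 * h0 : ℕ) : ℝ) := by exact_mod_cast this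
      _ = 2 * (h0 : ℝ) := by push_cast; ring
  have hkk1 : (1 : ℝ) ≤ kk := by rw [hkkdef]; exact_mod_cast hk1
  have hc0 : (0 : ℝ) ≤ c := by positivity
  -- bound choose
  have hchoose2 : Nat.choose k h0 ≤ 2 ^ k := by
    calc Nat.choose k h0 ≤ ∑ i ∈ Finset.range (k + 1), Nat.choose k i :=
          Finset.single_le_sum (fun i _ => Nat.zero_le _)
            (Finset.mem_range.2 (by omega))
      _ = 2 ^ k := Nat.sum_range_choose k
  have hA : (Nat.choose k h0 : ℝ) ≤ x ^ (kk : ℝ) := by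
    calc (Nat.choose k h0 : ℝ) ≤ ((2 ^ k : ℕ) : ℝ) := by exact_mod_cast hchoose2
      _ = (2 : ℝ) ^ k := by push_cast; ring
      _ ≤ x ^ k := by
          apply pow_le_pow_left₀ (by norm_num) (by linarith)
      _ = x ^ (kk : ℝ) := by rw [hkkdef, Real.rpow_natCast]
  have hBB : ((2 * n ^ 3 : ℕ) : ℝ) ^ h0 ≤ x ^ (4 * c) := by
    have h1 : ((2 * n ^ 3 : ℕ) : ℝ) = 2 * x ^ 3 := by push_cast; ring
    have h2 : 2 * x ^ 3 ≤ x ^ 4 := by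
      calc 2 * x ^ 3 ≤ x * x ^ 3 :=
            mul_le_mul_of_nonneg_right (by linarith) (pow_nonneg hx0.le 3)
        _ = x ^ 4 := by ring
    calc ((2 * n ^ 3 : ℕ) : ℝ) ^ h0 ≤ (x ^ 4) ^ h0 := by
          rw [h1]; exact pow_le_pow_left₀ (by positivity) h2 h0
      _ = x ^ (4 * h0) := by rw [← pow_mul]
      _ = x ^ ((4 * h0 : ℕ) : ℝ) := by rw [Real.rpow_natCast]
      _ = x ^ (4 * c) := by norm_num [hcdef]
  have hM : ((n ^ 128 : ℕ) : ℝ) ^ (-(0.8 * c)) = x ^ ((128 : ℝ) * (-(0.8 * c))) := by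
    have h1 : ((n ^ 128 : ℕ) : ℝ) = x ^ (128 : ℕ) := by push_cast; ring
    rw [h1, ← Real.rpow_natCast x 128, ← Real.rpow_mul hx0.le]
    norm_num
  have key : (Nat.choose k h0 : ℝ) * (((2 * n ^ 3 : ℕ) : ℝ) ^ h0 *
      (2 * ((n ^ 128 : ℕ) : ℝ) ^ (-(0.8 * c)))) ≤
      x ^ (kk : ℝ) * (x ^ (4 * c) * (2 * x ^ ((128 : ℝ) * (-(0.8 * c))))) := by
    rw [hM]
    have hp1 : (0 : ℝ) ≤ ((2 * n ^ 3 : ℕ) : ℝ) ^ h0 := by positivity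
    have hp2 : (0 : ℝ) ≤ 2 * x ^ ((128 : ℝ) * (-(0.8 * c))) := by positivity
    have hp3 : (0 : ℝ) ≤ (Nat.choose k h0 : ℝ) := by positivity
    gcongr
  refine key.trans ?_
  have hmerge : x ^ (kk : ℝ) * (x ^ (4 * c) * (2 * x ^ ((128 : ℝ) * (-(0.8 * c))))) =
      2 * x ^ (kk + 4 * c + (128 : ℝ) * (-(0.8 * c))) := by
    rw [Real.rpow_add hx0, Real.rpow_add hx0]; ring
  rw [hmerge]
  have hexp : kk + 4 * c + (128 : ℝ) * (-(0.8 * c)) ≤ -(5 * kk) + (-1) := by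
    have h08 : (0.8 : ℝ) = 4 / 5 := by norm_num
    rw [h08]; ring_nf; linarith
  have hsplit : x ^ (kk + 4 * c + (128 : ℝ) * (-(0.8 * c))) ≤
      x ^ (-(5 * kk)) * x ^ (-1 : ℝ) := by
    rw [← Real.rpow_add hx0]
    exact Real.rpow_le_rpow_of_exponent_le hx1 hexp
  calc 2 * x ^ (kk + 4 * c + (128 : ℝ) * (-(0.8 * c)))
      ≤ 2 * (x ^ (-(5 * kk)) * x ^ (-1 : ℝ)) := by
        linarith [hsplit]
    _ = (2 * x⁻¹) * x ^ (-(5 * kk)) := by rw [Real.rpow_neg_one]; ring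
    _ ≤ (1 / 12) * x ^ (-(5 * kk)) := by
        have h1 : 2 * x⁻¹ ≤ 1 / 12 := by
          rw [← div_eq_mul_inv, div_le_div_iff₀ hx0 (by norm_num : (0:ℝ) < 12)]
          linarith
        have h2 : (0 : ℝ) ≤ x ^ (-(5 * kk)) := Real.rpow_nonneg hx0.le _
        exact mul_le_mul_of_nonneg_right h1 h2
end

section
/- Exponential tail for sums of logarithmic potentials: Let p₁, …, p_k be independent random variables, each uniformly distributed on the open interval (0,1), and define c_j = log₂(1/p_j) + log₂(1/(1−p_j)). Then for each j, E[2^(c_j/2)] = ∫₀¹ (p(1−p))^(−1/2) dp = π, and consequently, for every real a, Pr[ Σ_{j=1}^k c_j ≥ a ] ≤ π^k · 2^(−a/2). -/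
open MeasureTheory Set

namespace ETLP

noncomputable def g (x : ℝ) : ℝ :=
  (2 : ℝ) ^ ((Real.logb 2 (1 / x) + Real.logb 2 (1 / (1 - x))) / 2)

noncomputable def f (x : ℝ) : ℝ := (x * (1 - x)) ^ (-(1/2) : ℝ)

noncomputable def μ1 : Measure ℝ := volume.restrict (Set.Ioo 0 1)

instance : SigmaFinite μ1 := by unfold μ1; infer_instance
instance : IsProbabilityMeasure μ1 := ⟨by simp [μ1, Real.volume_Ioo]⟩

noncomputable def m1 : MeasureSpace ℝ := ⟨μ1⟩

lemma sf : @SigmaFinite ℝ _ (@volume ℝ m1) := by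
  show SigmaFinite μ1; infer_instance

lemma key_eq {x : ℝ} (hx : x ∈ Set.Ioo (0:ℝ) 1) : g x = f x := by
  obtain ⟨hx0, hx1⟩ := hx
  have h1 : (0:ℝ) < 1 - x := by linarith
  have hp : (0:ℝ) < x * (1 - x) := mul_pos hx0 h1
  have hexp : (Real.logb 2 (1 / x) + Real.logb 2 (1 / (1 - x))) / 2
      = Real.logb 2 ((x * (1 - x)) ^ (-(1/2) : ℝ)) := by
    rw [Real.logb_rpow_eq_mul_logb_of_pos hp, one_div, one_div, Real.logb_inv, Real.logb_inv,
      Real.logb_mul hx0.ne' h1.ne']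
    ring
  rw [g, f, hexp, Real.rpow_logb (by norm_num) (by norm_num) (Real.rpow_pos_of_pos hp _)]

lemma gpos (x : ℝ) : 0 < g x := Real.rpow_pos_of_pos (by norm_num) _

lemma beta_half_compl : Complex.betaIntegral (1/2) (1/2) = Real.pi := by
  have h := Complex.Gamma_mul_Gamma_eq_betaIntegral (s := 1/2) (t := 1/2) (by norm_num) (by norm_num)
  rw [Complex.Gamma_one_half_eq] at h
  norm_num [Complex.Gamma_one] at h
  rw [← h, ← Complex.cpow_add _ _ (by exact_mod_cast Real.pi_ne_zero)]
  norm_num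

lemma key_cast : ∀ x ∈ Set.Ioo (0:ℝ) 1,
    (((x*(1-x)) ^ (-(1/2) : ℝ) : ℝ) : ℂ) = (x:ℂ)^((1/2:ℂ)-1) * (1-(x:ℂ))^((1/2:ℂ)-1) := by
  rintro x ⟨hx0, hx1⟩
  have h1 : (0:ℝ) ≤ x := hx0.le
  have h2 : (0:ℝ) ≤ 1 - x := by linarith
  rw [Real.mul_rpow h1 h2]
  push_cast
  rw [Complex.ofReal_cpow h1, Complex.ofReal_cpow h2]
  norm_num

lemma beta_half' : ∫ x in (0:ℝ)..1, (x*(1-x)) ^ (-(1/2) : ℝ) = Real.pi := by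
  have hco : ∫ x in (0:ℝ)..1, (((x*(1-x)) ^ (-(1/2) : ℝ) : ℝ) : ℂ)
      = Complex.betaIntegral (1/2) (1/2) := by
    rw [Complex.betaIntegral]
    apply intervalIntegral.integral_congr_ae
    filter_upwards [ae_iff.mpr (by simp : volume {x : ℝ | ¬ x ≠ 1} = 0)] with x hx hmem
    rw [Set.uIoc_of_le (by norm_num : (0:ℝ) ≤ 1)] at hmem
    exact key_cast x ⟨hmem.1, lt_of_le_of_ne hmem.2 hx⟩
  rw [intervalIntegral.integral_ofReal, beta_half_compl] at hco
  exact_mod_cast hco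

lemma beta_half : ∫ p in Set.Ioo (0:ℝ) 1, (p*(1-p)) ^ (-(1/2) : ℝ) = Real.pi := by
  rw [← MeasureTheory.integral_Ioc_eq_integral_Ioo,
    ← intervalIntegral.integral_of_le (by norm_num : (0:ℝ) ≤ 1)]
  exact beta_half'

lemma integrable_f : Integrable f μ1 := by
  have h := (Complex.betaIntegral_convergent (u := 1/2) (v := 1/2) (by norm_num) (by norm_num))
  rw [intervalIntegrable_iff_integrableOn_Ioc_of_le (by norm_num : (0:ℝ) ≤ 1)] at h
  have h2 : IntegrableOn (fun x : ℝ => ((x:ℂ)^((1/2:ℂ)-1) * (1-(x:ℂ))^((1/2:ℂ)-1)).re)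
      (Set.Ioo (0:ℝ) 1) volume := (h.mono_set Set.Ioo_subset_Ioc_self).re
  apply h2.congr
  refine (MeasureTheory.ae_restrict_iff' measurableSet_Ioo).mpr (Filter.Eventually.of_forall ?_)
  intro x hx
  simp only
  rw [← key_cast x hx, Complex.ofReal_re, f]

lemma g_ae_f : g =ᵐ[μ1] f := by
  refine (MeasureTheory.ae_restrict_iff' measurableSet_Ioo).mpr (Filter.Eventually.of_forall ?_)
  intro x hx
  exact key_eq hx

lemma integrable_g : Integrable g μ1 := integrable_f.congr g_ae_f.symm

lemma int_f : ∫ x, f x ∂μ1 = Real.pi := beta_half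

lemma int_g : ∫ x, g x ∂μ1 = Real.pi := by
  rw [integral_congr_ae g_ae_f]; exact int_f

lemma marginal (k : ℕ) (j : Fin k) :
    ∫ p : Fin k → ℝ, g (p j) ∂(Measure.pi fun _ : Fin k => μ1) = Real.pi := by
  have h := MeasureTheory.integral_fintype_prod_eq_prod (𝕜 := ℝ) (ι := Fin k) (E := fun _ => ℝ)
    (fun i x => if i = j then g x else 1) (μ := fun _ => μ1)
  simp only [Finset.prod_ite_eq', Finset.mem_univ, if_true] at h
  refine Eq.trans (h : _) ?_
  have : ∀ i : Fin k, (∫ x, (if i = j then g x else 1) ∂μ1) = if i = j then Real.pi else 1 := by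
    intro i
    by_cases hij : i = j
    · simp only [hij, if_true]; exact int_g
    · simp [hij, μ1, Real.volume_Ioo]
  have h2 : (∏ i : Fin k, ∫ x, (if i = j then g x else 1) ∂μ1)
      = ∏ i : Fin k, if i = j then Real.pi else 1 := Finset.prod_congr rfl fun i _ => this i
  refine Eq.trans (h2 : _) ?_
  simp

lemma int_prod (k : ℕ) :
    ∫ p : Fin k → ℝ, ∏ j : Fin k, g (p j) ∂(Measure.pi fun _ : Fin k => μ1)
      = Real.pi ^ k := by
  have h := MeasureTheory.integral_fintype_prod_eq_prod (𝕜 := ℝ) (ι := Fin k) (E := fun _ => ℝ)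
    (fun _ x => g x) (μ := fun _ => μ1)
  refine Eq.trans (h : _) ?_
  simp only [Finset.prod_const, Finset.card_univ, Fintype.card_fin]
  exact congrArg (· ^ k) (int_g : _)

lemma integrable_prod (k : ℕ) :
    Integrable (fun p : Fin k → ℝ => ∏ j : Fin k, g (p j)) (Measure.pi fun _ : Fin k => μ1) :=
  MeasureTheory.Integrable.fintype_prod (𝕜 := ℝ) (ι := Fin k) (E := ℝ) (f := fun _ => g)
    (μ := fun _ => μ1) (fun _ => integrable_g)

lemma part3 (k : ℕ) (a : ℝ) :
    (Measure.pi fun _ : Fin k => μ1)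
        {p : Fin k → ℝ |
          a ≤ ∑ j, (Real.logb 2 (1 / p j) + Real.logb 2 (1 / (1 - p j)))} ≤
      ENNReal.ofReal (Real.pi ^ k * (2 : ℝ) ^ (-a / 2)) := by
  set μ := Measure.pi fun _ : Fin k => μ1 with hμ
  set F : (Fin k → ℝ) → ℝ := fun p => ∏ j : Fin k, g (p j) with hF
  set ε : ℝ := (2:ℝ) ^ (a/2) with hε
  have hεpos : 0 < ε := Real.rpow_pos_of_pos (by norm_num) _
  have hFeq : ∀ p : Fin k → ℝ,
      F p = (2:ℝ) ^ ((∑ j, (Real.logb 2 (1 / p j) + Real.logb 2 (1 / (1 - p j)))) / 2) := by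
    intro p
    rw [hF]
    simp only [g]
    rw [← Real.rpow_sum_of_pos (by norm_num : (0:ℝ) < 2), ← Finset.sum_div]
  have hsub : {p : Fin k → ℝ |
      a ≤ ∑ j, (Real.logb 2 (1 / p j) + Real.logb 2 (1 / (1 - p j)))} ⊆ {p | ε ≤ F p} := by
    intro p hp
    simp only [Set.mem_setOf_eq] at hp ⊢
    rw [hFeq p, hε]
    exact Real.rpow_le_rpow_of_exponent_le (by norm_num) (by linarith)
  have hmark := mul_meas_ge_le_integral_of_nonneg (μ := μ)
    (Filter.Eventually.of_forall fun p => Finset.prod_nonneg fun j _ => (gpos _).le)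
    (integrable_prod k) ε
  rw [int_prod k] at hmark
  have htR : (μ {p | ε ≤ F p}).toReal ≤ Real.pi ^ k * (2:ℝ) ^ (-a/2) := by
    have h1 : (μ {p | ε ≤ F p}).toReal ≤ Real.pi ^ k / ε := (le_div_iff₀' hεpos).mpr hmark
    have h2 : Real.pi ^ k / ε = Real.pi ^ k * (2:ℝ) ^ (-a/2) := by
      rw [div_eq_mul_inv, hε, ← Real.rpow_neg (by norm_num), neg_div]
    linarith
  haveI : IsProbabilityMeasure μ := by rw [hμ]; infer_instance
  calc μ _ ≤ μ {p | ε ≤ F p} := measure_mono hsub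
    _ = ENNReal.ofReal (μ {p | ε ≤ F p}).toReal :=
        (ENNReal.ofReal_toReal (measure_ne_top μ _)).symm
    _ ≤ ENNReal.ofReal (Real.pi ^ k * (2:ℝ) ^ (-a/2)) := ENNReal.ofReal_le_ofReal htR

end ETLP

/-- **Exponential tail for sums of logarithmic potentials.** Let `p₁, …, p_k` be
independent uniform random variables on `(0,1)` (modeled by the product of the uniform
probability measures on `(0,1)`), and `c_j = log₂(1/p_j) + log₂(1/(1−p_j))`. Then
`E[2^(c_j/2)] = ∫₀¹ (p(1−p))^(−1/2) dp = π`, and for every real `a`,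
`Pr[Σ_j c_j ≥ a] ≤ π^k · 2^(−a/2)`. -/
theorem exponential_tail_log_potentials (k : ℕ) :
    (∀ j : Fin k,
      ∫ p : Fin k → ℝ,
          (2 : ℝ) ^ ((Real.logb 2 (1 / p j) + Real.logb 2 (1 / (1 - p j))) / 2)
        ∂(Measure.pi fun _ : Fin k => volume.restrict (Set.Ioo (0 : ℝ) 1)) =
      Real.pi) ∧
    (∫ p in Set.Ioo (0 : ℝ) 1, (p * (1 - p)) ^ (-(1 / 2) : ℝ) = Real.pi) ∧
    (∀ a : ℝ,
      (Measure.pi fun _ : Fin k => volume.restrict (Set.Ioo (0 : ℝ) 1))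
          {p : Fin k → ℝ |
            a ≤ ∑ j, (Real.logb 2 (1 / p j) + Real.logb 2 (1 / (1 - p j)))} ≤
        ENNReal.ofReal (Real.pi ^ k * (2 : ℝ) ^ (-a / 2))) := by
  refine ⟨fun j => ETLP.marginal k j, ETLP.beta_half, fun a => ETLP.part3 k a⟩
end
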